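/- Let k ≥ 3 and e ≥ 2 be integers and let n = ⌊(k−1)·2^e/k⌋. Then k·n − 2^{ν₂(n+1)} + 1 ≥ (k−1)·(2^e − 1). -/

import Mathlib

/-- Inequality (4.3) in the proof of Theorem 4.1: for `k ≥ 3`, `e ≥ 2`, and
`n = ⌊(k−1)·2^e/k⌋`, one has `k·n − 2^{ν₂(n+1)} + 1 ≥ (k−1)(2^e − 1)`. -/
theorem stmt14 (k e : ℕ) (hk : 3 ≤ k) (he : 2 ≤ e) (n : ℕ)
    (hn : n = (k - 1) * 2 ^ e / k) :
    ((k : ℤ) - 1) * (2 ^ e - 1) ≤ (k : ℤ) * n - 2 ^ padicValNat 2 (n + 1) + 1 := by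
  have hk0 : 0 < k := by omega
  set m := (k - 1) * 2 ^ e with hm
  set r := m % k with hr
  have hdm : k * n + r = m := by rw [hn]; exact Nat.div_add_mod m k
  have hrk : r < k := Nat.mod_lt _ hk0
  have hlt : n < 2 ^ e := by
    rw [hn, Nat.div_lt_iff_lt_mul hk0]
    have h2 : 0 < 2 ^ e := Nat.pow_pos (by norm_num)
    calc (k - 1) * 2 ^ e < k * 2 ^ e := by
          exact mul_lt_mul_of_pos_right (by omega) h2
      _ = 2 ^ e * k := mul_comm _ _
  set v := padicValNat 2 (n + 1) with hv
  have hdvd : 2 ^ v ∣ n + 1 := pow_padicValNat_dvd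
  have h2v : 2 ^ v ≤ n + 1 := Nat.le_of_dvd (by omega) hdvd
  have hve : v ≤ e := by
    by_contra h
    push_neg at h
    have : 2 ^ e < 2 ^ v := Nat.pow_lt_pow_right (by norm_num) h
    omega
  have hknr : (k : ℤ) * n + r = ((k : ℤ) - 1) * 2 ^ e := by
    have hcast : ((k : ℤ)) * n + r = ((k - 1 : ℕ) : ℤ) * 2 ^ e := by exact_mod_cast hdm
    rw [Nat.cast_sub (by omega : 1 ≤ k)] at hcast
    push_cast at hcast ⊢
    linarith
  have hdvdZ : (2 : ℤ) ^ v ∣ (k : ℤ) - r := by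
    have h1 : (2 : ℤ) ^ v ∣ (k : ℤ) * (n + 1) := Dvd.dvd.mul_left (by exact_mod_cast hdvd) _
    have h2 : (2 : ℤ) ^ v ∣ ((k : ℤ) - 1) * 2 ^ e := Dvd.dvd.mul_left (pow_dvd_pow 2 hve) _
    have hkey : (k : ℤ) - r = (k : ℤ) * (n + 1) - ((k : ℤ) - 1) * 2 ^ e := by linarith
    rw [hkey]
    exact dvd_sub h1 h2
  have hle : (2 : ℤ) ^ v ≤ (k : ℤ) - r := by
    apply Int.le_of_dvd (by exact_mod_cast (by omega : (0:ℤ) < (k:ℤ) - r)) hdvdZ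
  nlinarith [hle, hknr]
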